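/- arXiv:2106.04748 — 2 statements merged into one kernel-verified Lean document; each statement's English description precedes it below -/
import Mathlib

section
/- For the FTRL dynamic with regularizer h and for any x* ∈ Δ^n, define the storage function L(q) = h*(q) − ⟨q, x*⟩ + h(x*). Then (i) L(q) ≥ 0 for every q ∈ ℝ^n, and (ii) for every initial state q⁰ ∈ ℝ^n, every continuous payoff stream p : [0,∞) → ℝ^n, and every t ≥ 0, with q(t) = q⁰ + ∫₀ᵗ p(τ) dτ and x(t) = f(q(t)), one has L(q(t)) = L(q⁰) + ∫₀ᵗ ⟨x(τ) − x*, p(τ)⟩ dτ. That is, the FTRL learning operator with shift x* is finitely lossless. -/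
open scoped BigOperators
open MeasureTheory

set_option maxHeartbeats 1000000

noncomputable section

/-- The standard probability simplex in ℝⁿ. -/
def simplex (n : ℕ) : Set (Fin n → ℝ) := {x | (∀ j, 0 ≤ x j) ∧ ∑ j, x j = 1}

/-- Euclidean inner product on ℝⁿ. -/
def dot {n : ℕ} (a b : Fin n → ℝ) : ℝ := ∑ j, a j * b j

/-- The cumulative-payoff trajectory q(t) = q⁰ + ∫₀ᵗ p(τ) dτ. -/
def traj {n : ℕ} (q0 : Fin n → ℝ) (p : ℝ → Fin n → ℝ) (t : ℝ) : Fin n → ℝ :=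
  q0 + ∫ τ in (0:ℝ)..t, p τ

/-! ### Auxiliary lemmas -/

lemma dot_comm' {n : ℕ} (a b : Fin n → ℝ) : dot a b = dot b a := by
  simp [dot, mul_comm]

lemma dot_sub_left' {n : ℕ} (a b c : Fin n → ℝ) : dot (a - b) c = dot a c - dot b c := by
  simp [dot, sub_mul, Finset.sum_sub_distrib]

lemma dot_sub_right' {n : ℕ} (a b c : Fin n → ℝ) : dot a (b - c) = dot a b - dot a c := by
  simp [dot, mul_sub, Finset.sum_sub_distrib]

lemma dot_expand' {n : ℕ} (a b x y : Fin n → ℝ) :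
    dot (a - b) (x - y) = dot a x - dot b x - dot a y + dot b y := by
  unfold dot
  rw [← Finset.sum_sub_distrib, ← Finset.sum_sub_distrib, ← Finset.sum_add_distrib]
  refine Finset.sum_congr rfl fun j _ => ?_
  simp only [Pi.sub_apply]
  ring

lemma continuous_dot' (n : ℕ) :
    Continuous (fun ab : (Fin n → ℝ) × (Fin n → ℝ) => dot ab.1 ab.2) := by
  unfold dot
  exact continuous_finset_sum _ fun j _ =>
    ((continuous_apply j).comp continuous_fst).mul ((continuous_apply j).comp continuous_snd)

lemma isCompact_simplex' (n : ℕ) : IsCompact (simplex n) := by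
  have hsub : simplex n ⊆ Set.Icc (0 : Fin n → ℝ) 1 := by
    rintro x ⟨hx0, hx1⟩
    refine ⟨fun j => hx0 j, fun j => ?_⟩
    calc x j ≤ ∑ i, x i := Finset.single_le_sum (fun i _ => hx0 i) (Finset.mem_univ j)
    _ = 1 := hx1
  have h1 : IsClosed {x : Fin n → ℝ | ∀ j, 0 ≤ x j} := by
    simp only [Set.setOf_forall]
    exact isClosed_iInter fun j => isClosed_le continuous_const (continuous_apply j)
  have h2 : IsClosed {x : Fin n → ℝ | ∑ j, x j = 1} :=
    isClosed_eq (continuous_finset_sum _ fun j _ => continuous_apply j) continuous_const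
  exact isCompact_Icc.of_isClosed_subset (h1.inter h2) hsub

/-- Uniqueness of the maximizer of `x ↦ ⟨q,x⟩ - h x` on the simplex, for strictly convex `h`. -/
lemma maximizer_eq' {n : ℕ} {h : (Fin n → ℝ) → ℝ}
    (hconv : StrictConvexOn ℝ (simplex n) h) (q y z : Fin n → ℝ)
    (hy : y ∈ simplex n) (hz : z ∈ simplex n)
    (hym : ∀ x ∈ simplex n, dot q x - h x ≤ dot q y - h y)
    (hzm : ∀ x ∈ simplex n, dot q x - h x ≤ dot q z - h z) : y = z := by
  by_contra hne
  have heq : dot q y - h y = dot q z - h z := le_antisymm (hzm y hy) (hym z hz)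
  set w := (2⁻¹:ℝ) • y + (2⁻¹:ℝ) • z with hw
  have hwmem : w ∈ simplex n := hconv.1 hy hz (by norm_num) (by norm_num) (by norm_num)
  have hlt : h w < (2⁻¹:ℝ) * h y + (2⁻¹:ℝ) * h z := by
    have := hconv.2 hy hz hne (by norm_num : (0:ℝ) < 2⁻¹) (by norm_num : (0:ℝ) < 2⁻¹) (by norm_num)
    simpa [smul_eq_mul] using this
  have hdotw : dot q w = (2⁻¹:ℝ) * dot q y + (2⁻¹:ℝ) * dot q z := by
    unfold dot
    rw [Finset.mul_sum, Finset.mul_sum, ← Finset.sum_add_distrib]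
    refine Finset.sum_congr rfl fun j _ => ?_
    simp only [hw, Pi.add_apply, Pi.smul_apply, smul_eq_mul]
    ring
  have := hym w hwmem
  linarith

/-- The FTRL conversion map is continuous. -/
lemma f_continuous' {n : ℕ} {h : (Fin n → ℝ) → ℝ}
    (hconv : StrictConvexOn ℝ (simplex n) h)
    (hcont : ContinuousOn h (simplex n))
    (f : (Fin n → ℝ) → (Fin n → ℝ))
    (hf : ∀ q, f q ∈ simplex n ∧
      ∀ x ∈ simplex n, dot q x - h x ≤ dot q (f q) - h (f q)) :
    Continuous f := by
  rw [continuous_iff_continuousAt]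
  intro q₀
  rw [Metric.continuousAt_iff]
  by_contra hc
  push_neg at hc
  obtain ⟨ε, hε, hcc⟩ := hc
  have hex : ∀ k : ℕ, ∃ x, dist x q₀ < 1/(k+1) ∧ ε ≤ dist (f x) (f q₀) := by
    intro k
    exact hcc (1/(k+1)) (by positivity)
  choose qs hqs1 hqs2 using hex
  have hqs : Filter.Tendsto qs Filter.atTop (nhds q₀) := by
    rw [tendsto_iff_dist_tendsto_zero]
    refine squeeze_zero (fun k => dist_nonneg) (fun k => (hqs1 k).le) ?_
    exact tendsto_one_div_add_atTop_nhds_zero_nat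
  obtain ⟨y, hy, ψ, hψ, hlim⟩ :=
    (isCompact_simplex' n).tendsto_subseq (fun k => (hf (qs k)).1)
  have hqsψ : Filter.Tendsto (fun i => qs (ψ i)) Filter.atTop (nhds q₀) :=
    hqs.comp hψ.tendsto_atTop
  have hym : ∀ x ∈ simplex n, dot q₀ x - h x ≤ dot q₀ y - h y := by
    intro x hx
    have h1 : Filter.Tendsto (fun i => dot (qs (ψ i)) x - h x) Filter.atTop
        (nhds (dot q₀ x - h x)) := by
      have cdx : Continuous (fun a : Fin n → ℝ => dot a x) :=
        (continuous_dot' n).comp (continuous_id.prodMk continuous_const)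
      exact ((cdx.tendsto q₀).comp hqsψ).sub_const (h x)
    have hdot2 : Filter.Tendsto (fun i => dot (qs (ψ i)) (f (qs (ψ i)))) Filter.atTop
        (nhds (dot q₀ y)) :=
      ((continuous_dot' n).tendsto (q₀, y)).comp (hqsψ.prodMk_nhds hlim)
    have hh : Filter.Tendsto (fun i => h (f (qs (ψ i)))) Filter.atTop (nhds (h y)) := by
      refine (hcont y hy).tendsto.comp ?_
      rw [tendsto_nhdsWithin_iff]
      exact ⟨hlim, Filter.Eventually.of_forall fun i => (hf _).1⟩
    exact le_of_tendsto_of_tendsto' h1 (hdot2.sub hh) (fun i => (hf (qs (ψ i))).2 x hx)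
  have heqy : y = f q₀ := maximizer_eq' hconv q₀ y (f q₀) hy (hf q₀).1 hym (hf q₀).2
  have hdistlim : Filter.Tendsto (fun i => dist (f (qs (ψ i))) (f q₀)) Filter.atTop
      (nhds (dist y (f q₀))) := hlim.dist tendsto_const_nhds
  have hge : ε ≤ dist y (f q₀) := ge_of_tendsto' hdistlim (fun i => hqs2 (ψ i))
  rw [heqy, dist_self] at hge
  linarith


/- STATEMENT 1: For the FTRL dynamic with regularizer h and any x* ∈ Δⁿ, the storage
function L(q) = h*(q) − ⟨q, x*⟩ + h(x*) is nonnegative and the learning operator with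
shift x* is lossless: L(q(t)) = L(q⁰) + ∫₀ᵗ ⟨x(τ) − x*, p(τ)⟩ dτ. -/

theorem ftrl_finitely_lossless
    (n : ℕ) (h : (Fin n → ℝ) → ℝ)
    (hconv : StrictConvexOn ℝ (simplex n) h)
    (hcont : ContinuousOn h (simplex n))
    (f : (Fin n → ℝ) → (Fin n → ℝ))
    (hf : ∀ q, f q ∈ simplex n ∧
      ∀ x ∈ simplex n, dot q x - h x ≤ dot q (f q) - h (f q))
    (xstar : Fin n → ℝ) (hxstar : xstar ∈ simplex n)
    (L : (Fin n → ℝ) → ℝ)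
    (hL : ∀ q, L q = (dot q (f q) - h (f q)) - dot q xstar + h xstar) :
    (∀ q, 0 ≤ L q) ∧
    (∀ (q0 : Fin n → ℝ) (p : ℝ → Fin n → ℝ), Continuous p → ∀ t : ℝ, 0 ≤ t →
      L (traj q0 p t) =
        L q0 + ∫ τ in (0:ℝ)..t, dot (f (traj q0 p τ) - xstar) (p τ)) := by
  have hfc : Continuous f := f_continuous' hconv hcont f hf
  constructor
  · intro q
    have h1 := (hf q).2 xstar hxstar
    rw [hL q]
    linarith
  · intro q0 p hp t ht
    set q : ℝ → Fin n → ℝ := traj q0 p with hqdef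
    have hq : ∀ u : ℝ, HasDerivAt q (p u) u := by
      intro u
      have h1 : HasDerivAt (fun t => ∫ τ in (0:ℝ)..t, p τ) (p u) u :=
        intervalIntegral.integral_hasDerivAt_right (hp.intervalIntegrable _ _)
          (hp.stronglyMeasurableAtFilter _ _) hp.continuousAt
      rw [hqdef]; exact h1.const_add q0
    have hqc : Continuous q := continuous_iff_continuousAt.2 fun u => (hq u).continuousAt
    have key : ∀ s : ℝ, HasDerivAt (fun v => L (q v)) (dot (f (q s) - xstar) (p s)) s := by
      intro s
      set c := f (q s) - xstar with hc
      have hdA : HasDerivAt (fun v => dot (q v) c) (dot (p s) c) s := by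
        have hj : ∀ j : Fin n, HasDerivAt (fun v => q v j * c j) (p s j * c j) s := by
          intro j
          have := ((ContinuousLinearMap.proj j :
            (Fin n → ℝ) →L[ℝ] ℝ)).hasFDerivAt.comp_hasDerivAt s (hq s)
          exact (this.mul_const (c j))
        simpa [dot] using HasDerivAt.fun_sum (fun j (_ : j ∈ Finset.univ) => hj j)
      have hA := hasDerivAt_iff_isLittleO.mp hdA
      have hBO : (fun v => q v - q s) =O[nhds s] fun v => v - s := (hq s).isBigO_sub
      have hfq : Filter.Tendsto (fun v => f (q v) - f (q s)) (nhds s) (nhds 0) := by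
        have := ((hfc.comp hqc).tendsto s).sub (tendsto_const_nhds (x := f (q s)))
        simpa using this
      have hB : (fun v => dot (q v - q s) (f (q v) - f (q s))) =o[nhds s] fun v => v - s := by
        have hterm : ∀ j : Fin n, (fun v => (q v - q s) j * (f (q v) - f (q s)) j)
            =o[nhds s] fun v => v - s := by
          intro j
          have h1 : (fun v => (q v - q s) j) =O[nhds s] fun v => v - s :=
            (Asymptotics.isBigO_of_le _ (fun v => norm_le_pi_norm (q v - q s) j)).trans hBO
          have h2 : (fun v => (f (q v) - f (q s)) j) =o[nhds s] (fun _ => (1:ℝ)) := by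
            rw [Asymptotics.isLittleO_one_iff]
            have := ((continuous_apply j).tendsto (0 : Fin n → ℝ)).comp hfq
            simpa [Function.comp_def] using this
          simpa using h1.mul_isLittleO h2
        have := Asymptotics.IsLittleO.fun_sum (fun j (_ : j ∈ Finset.univ) => hterm j)
        simpa [dot] using this
      have hAle : ∀ v, dot (q v - q s) c ≤ L (q v) - L (q s) := by
        intro v
        have h1 := (hf (q v)).2 (f (q s)) (hf (q s)).1
        rw [hL (q v), hL (q s), hc, dot_expand']
        linarith
      have hBle : ∀ v, L (q v) - L (q s) ≤ dot (q v - q s) (f (q v) - xstar) := by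
        intro v
        have h1 := (hf (q s)).2 (f (q v)) (hf (q v)).1
        rw [hL (q v), hL (q s), dot_expand']
        linarith
      rw [hasDerivAt_iff_isLittleO]
      have hsum : (fun v => ‖dot (q v) c - dot (q s) c - (v - s) • dot (p s) c‖
          + ‖dot (q v - q s) (f (q v) - f (q s))‖) =o[nhds s] fun v => v - s :=
        hA.norm_left.add hB.norm_left
      refine Asymptotics.IsBigO.trans_isLittleO ?_ hsum
      apply Asymptotics.isBigO_of_le
      intro v
      have hlo := hAle v
      have hhi := hBle v
      have e1 : dot (q v - q s) c = dot (q v) c - dot (q s) c := dot_sub_left' _ _ _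
      have e2 : dot (q v - q s) (f (q v) - xstar) - dot (q v - q s) c
          = dot (q v - q s) (f (q v) - f (q s)) := by
        rw [hc, ← dot_sub_right']
        congr 1
        abel
      have hd : dot c (p s) = dot (p s) c := dot_comm' _ _
      set a1 := dot (q v) c - dot (q s) c - (v - s) • dot (p s) c with ha1
      set b1 := dot (q v - q s) (f (q v) - f (q s)) with hb1
      have hnn : (0:ℝ) ≤ ‖a1‖ + ‖b1‖ := by positivity
      rw [Real.norm_eq_abs (L (q v) - L (q s) - (v - s) • dot c (p s)),
        Real.norm_eq_abs (‖a1‖ + ‖b1‖), abs_of_nonneg hnn]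
      rw [hd, abs_le]
      simp only [smul_eq_mul] at ha1 ⊢
      have l1 : -‖a1‖ ≤ a1 := neg_abs_le a1
      have l2 : a1 ≤ ‖a1‖ := le_abs_self a1
      have l3 : -‖b1‖ ≤ b1 := neg_abs_le b1
      have l4 : b1 ≤ ‖b1‖ := le_abs_self b1
      have hlo' : dot (q v) c - dot (q s) c ≤ L (q v) - L (q s) := by
        rw [← e1]; exact hlo
      have hhi' : L (q v) - L (q s) ≤ b1 + (dot (q v) c - dot (q s) c) := by
        linarith [hhi, e2, e1]
      constructor <;> linarith [ha1]
    have hint : Continuous fun τ => dot (f (q τ) - xstar) (p τ) := by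
      unfold dot
      exact continuous_finset_sum _ fun j _ =>
        ((continuous_apply j).comp ((hfc.comp hqc).sub continuous_const)).mul
          ((continuous_apply j).comp hp)
    have hFTC := intervalIntegral.integral_eq_sub_of_hasDerivAt
        (f := fun v => L (q v)) (fun τ _ => key τ) ((hint.intervalIntegrable 0 t))
    have hq0 : q 0 = q0 := by simp [hqdef, traj]
    rw [hFTC]
    show L (q t) = L q0 + (L (q t) - L (q 0))
    rw [hq0]
    ring
end
end

section
/- Any convex combination of FTRL learning dynamics guarantees constant regret. Precisely: let h_1,…,h_k : Δ^n → ℝ be strictly convex continuous regularizers, let f_ℓ(q) = argmax_{x ∈ Δ^n} (⟨q, x⟩ − h_ℓ(x)), let α_1,…,α_k ≥ 0 with ∑_ℓ α_ℓ = 1, and consider the learning dynamic with conversion function f = ∑_ℓ α_ℓ f_ℓ and initial state q⁰. Then for every continuous payoff stream p : [0,∞) → ℝ^n and every T > 0, the regret at time T is at most max_{1≤j≤n} ∑_{ℓ=1}^k α_ℓ ( h_ℓ*(q⁰) − q⁰_j + h_ℓ(e_j) ). -/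
open scoped BigOperators
open MeasureTheory Filter Topology

noncomputable section

namespace FTRLAux

variable {n : ℕ}

lemma dot_sub_left (a b c : Fin n → ℝ) : dot (a - b) c = dot a c - dot b c := by
  simp [dot, sub_mul, Finset.sum_sub_distrib]

lemma dot_smul_left (r : ℝ) (a c : Fin n → ℝ) : dot (r • a) c = r * dot a c := by
  simp [dot, Finset.mul_sum, mul_assoc]

lemma dot_single (q : Fin n → ℝ) (j : Fin n) : dot q (Pi.single j 1) = q j := by
  simp [dot, Pi.single_apply, mul_ite]

lemma single_mem_simplex (j : Fin n) : (Pi.single j 1 : Fin n → ℝ) ∈ simplex n := by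
  constructor
  · intro i
    rcases eq_or_ne i j with rfl | hij
    · simp
    · simp [Pi.single_apply, hij]
  · simp

lemma continuous_dot :
    Continuous (fun x : (Fin n → ℝ) × (Fin n → ℝ) => dot x.1 x.2) := by
  unfold dot
  exact continuous_finset_sum _ fun j _ =>
    ((continuous_apply j).comp continuous_fst).mul ((continuous_apply j).comp continuous_snd)

lemma isCompact_simplex : IsCompact (simplex n) := by
  have hsub : simplex n ⊆ Set.Icc (0 : Fin n → ℝ) 1 := by
    rintro x ⟨hx0, hx1⟩
    refine ⟨fun j => hx0 j, fun j => ?_⟩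
    calc x j ≤ ∑ i, x i := Finset.single_le_sum (fun i _ => hx0 i) (Finset.mem_univ j)
    _ = 1 := hx1
  have hclosed : IsClosed (simplex n) := by
    have h1 : IsClosed {x : Fin n → ℝ | ∀ j, 0 ≤ x j} := by
      have : {x : Fin n → ℝ | ∀ j, 0 ≤ x j} = ⋂ j, {x : Fin n → ℝ | 0 ≤ x j} := by
        ext x; simp
      rw [this]
      exact isClosed_iInter fun j => isClosed_le continuous_const (continuous_apply j)
    have h2 : IsClosed {x : Fin n → ℝ | ∑ j, x j = 1} :=
      isClosed_eq (continuous_finset_sum _ fun j _ => continuous_apply j) continuous_const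
    exact h1.inter h2
  exact isCompact_Icc.of_isClosed_subset hclosed hsub

/-- Uniqueness of the maximizer for a strictly convex regularizer. -/
lemma maximizer_unique {h : (Fin n → ℝ) → ℝ} (hconv : StrictConvexOn ℝ (simplex n) h)
    {q x y : Fin n → ℝ} (hx : x ∈ simplex n) (hy : y ∈ simplex n)
    (hxm : ∀ z ∈ simplex n, dot q z - h z ≤ dot q x - h x)
    (hym : ∀ z ∈ simplex n, dot q z - h z ≤ dot q y - h y) : x = y := by
  by_contra hne
  set m : Fin n → ℝ := (1/2 : ℝ) • x + (1/2 : ℝ) • y with hm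
  have hmem : m ∈ simplex n := by
    constructor
    · intro j
      have := hx.1 j; have := hy.1 j
      simp only [hm, Pi.add_apply, Pi.smul_apply, smul_eq_mul]
      linarith
    · have hx1 := hx.2; have hy1 := hy.2
      simp only [hm, Pi.add_apply, Pi.smul_apply, smul_eq_mul]
      rw [Finset.sum_add_distrib, ← Finset.mul_sum, ← Finset.mul_sum, hx1, hy1]
      norm_num
  have hlt : h m < (1/2 : ℝ) * h x + (1/2 : ℝ) * h y :=
    hconv.2 hx hy hne (by norm_num) (by norm_num) (by norm_num)
  have hdm : dot q m = (1/2 : ℝ) * dot q x + (1/2 : ℝ) * dot q y := by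
    simp only [hm, dot, Pi.add_apply, Pi.smul_apply, smul_eq_mul]
    rw [Finset.mul_sum, Finset.mul_sum, ← Finset.sum_add_distrib]
    apply Finset.sum_congr rfl; intros; ring
  have h1 := hxm y hy
  have h2 := hym x hx
  have h3 := hxm m hmem
  have heq : dot q x - h x = dot q y - h y := le_antisymm h2 h1
  have : dot q m - h m > dot q x - h x := by
    rw [hdm]; linarith
  linarith [h3]

/-- Continuity of the FTRL conversion function. -/
lemma f_continuous {h : (Fin n → ℝ) → ℝ} (hconv : StrictConvexOn ℝ (simplex n) h)
    (hcont : ContinuousOn h (simplex n)) {f : (Fin n → ℝ) → Fin n → ℝ}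
    (hf : ∀ q, f q ∈ simplex n ∧
      ∀ x ∈ simplex n, dot q x - h x ≤ dot q (f q) - h (f q)) :
    Continuous f := by
  rw [continuous_iff_continuousAt]
  intro q
  apply tendsto_of_subseq_tendsto
  intro ns hns
  obtain ⟨x, hxmem, φ, hφ, hxt⟩ :=
    isCompact_simplex.tendsto_subseq (x := fun i => f (ns i)) (fun i => (hf (ns i)).1)
  refine ⟨φ, ?_⟩
  have hvq : Tendsto (fun i => ns (φ i)) atTop (𝓝 q) :=
    hns.comp hφ.tendsto_atTop
  -- show x = f q
  have hdot2 : Tendsto (fun i => dot (ns (φ i)) (f (ns (φ i)))) atTop (𝓝 (dot q x)) := by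
    have : Tendsto (fun i => ((ns (φ i) : Fin n → ℝ), f (ns (φ i)))) atTop (𝓝 (q, x)) :=
      hvq.prodMk_nhds hxt
    exact (continuous_dot.continuousAt.tendsto.comp this)
  have hh : Tendsto (fun i => h (f (ns (φ i)))) atTop (𝓝 (h x)) := by
    have hmemseq : ∀ i, f (ns (φ i)) ∈ simplex n := fun i => (hf (ns (φ i))).1
    have hwithin : Tendsto (fun i => f (ns (φ i))) atTop (𝓝[simplex n] x) :=
      tendsto_nhdsWithin_of_tendsto_nhds_of_eventually_within _ hxt
        (Eventually.of_forall hmemseq)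
    exact (hcont x hxmem).tendsto.comp hwithin
  have hxmax : ∀ z ∈ simplex n, dot q z - h z ≤ dot q x - h x := by
    intro z hz
    have hle : ∀ i, dot (ns (φ i)) z - h z ≤
        dot (ns (φ i)) (f (ns (φ i))) - h (f (ns (φ i))) :=
      fun i => (hf (ns (φ i))).2 z hz
    have hL : Tendsto (fun i => dot (ns (φ i)) z - h z) atTop (𝓝 (dot q z - h z)) := by
      have : Tendsto (fun i => ((ns (φ i) : Fin n → ℝ), z)) atTop (𝓝 (q, z)) :=
        hvq.prodMk_nhds tendsto_const_nhds
      exact ((continuous_dot.continuousAt.tendsto.comp this).sub tendsto_const_nhds)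
    have hR : Tendsto (fun i => dot (ns (φ i)) (f (ns (φ i))) - h (f (ns (φ i)))) atTop
        (𝓝 (dot q x - h x)) := hdot2.sub hh
    exact le_of_tendsto_of_tendsto' hL hR hle
  have : x = f q := maximizer_unique hconv hxmem (hf q).1 hxmax ((hf q).2)
  rw [← this]
  exact hxt

lemma abs_sub_le_of_between {a b s L : ℝ} (h1 : min a b ≤ s) (h2 : s ≤ max a b) :
    |s - L| ≤ |a - L| + |b - L| := by
  rcases min_le_iff.1 h1 with h1' | h1' <;> rcases le_max_iff.1 h2 with h2' | h2' <;>
    rw [abs_le] <;> constructor <;>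
    [skip; skip; skip; skip; skip; skip; skip; skip] <;>
    · have ha1 := le_abs_self (a - L); have ha2 := neg_abs_le (a - L)
      have hb1 := le_abs_self (b - L); have hb2 := neg_abs_le (b - L)
      have hb3 := abs_nonneg (b - L); have ha3 := abs_nonneg (a - L)
      linarith

end FTRLAux

open FTRLAux

set_option maxHeartbeats 2000000 in
theorem convex_combination_ftrl_constant_regret
    (n k : ℕ) [NeZero n] (h : Fin k → (Fin n → ℝ) → ℝ)
    (hconv : ∀ ℓ, StrictConvexOn ℝ (simplex n) (h ℓ))
    (hcont : ∀ ℓ, ContinuousOn (h ℓ) (simplex n))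
    (f : Fin k → (Fin n → ℝ) → (Fin n → ℝ))
    (hf : ∀ ℓ q, f ℓ q ∈ simplex n ∧
      ∀ x ∈ simplex n, dot q x - h ℓ x ≤ dot q (f ℓ q) - h ℓ (f ℓ q))
    (α : Fin k → ℝ) (hα : ∀ ℓ, 0 ≤ α ℓ) (hα1 : ∑ ℓ, α ℓ = 1)
    (q0 : Fin n → ℝ) :
    ∀ (p : ℝ → Fin n → ℝ), Continuous p → ∀ T : ℝ, 0 < T →
      (⨆ j, ∫ τ in (0:ℝ)..T, p τ j) -
        (∫ τ in (0:ℝ)..T, dot (p τ) (∑ ℓ, α ℓ • f ℓ (traj q0 p τ)))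
      ≤ ⨆ j, ∑ ℓ, α ℓ *
          ((dot q0 (f ℓ q0) - h ℓ (f ℓ q0)) - q0 j + h ℓ (Pi.single j 1)) := by
  intro p hp T hT
  have hne : Nonempty (Fin n) := ⟨⟨0, Nat.pos_of_ne_zero (NeZero.ne n)⟩⟩
  set q : ℝ → Fin n → ℝ := traj q0 p with hqdef
  -- derivative of q
  have hqd : ∀ t : ℝ, HasDerivAt q (p t) t := by
    intro t
    have hint : ∀ a b : ℝ, IntervalIntegrable p volume a b := fun a b =>
      hp.intervalIntegrable a b
    have := intervalIntegral.integral_hasDerivAt_right (hint 0 t)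
      (hp.stronglyMeasurableAtFilter _ _) hp.continuousAt
    exact this.const_add q0
  have hqc : Continuous q := continuous_iff_continuousAt.2 fun t => (hqd t).continuousAt
  have hfc : ∀ ℓ, Continuous (f ℓ) := fun ℓ =>
    f_continuous (hconv ℓ) (hcont ℓ) (hf ℓ)
  -- the conjugate-value function
  set s : Fin k → (Fin n → ℝ) → ℝ := fun ℓ w => dot w (f ℓ w) - h ℓ (f ℓ w) with hsdef
  -- subgradient inequality
  have hsub : ∀ ℓ (w w' : Fin n → ℝ), s ℓ w + dot (w' - w) (f ℓ w) ≤ s ℓ w' := by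
    intro ℓ w w'
    have := (hf ℓ w').2 (f ℓ w) (hf ℓ w).1
    have hlin : dot w' (f ℓ w) = dot w (f ℓ w) + dot (w' - w) (f ℓ w) := by
      rw [dot_sub_left]; ring
    simp only [hsdef]
    rw [hlin] at this
    linarith
  -- derivative of s ℓ ∘ q
  have hds : ∀ ℓ (t : ℝ), HasDerivAt (fun u => s ℓ (q u)) (dot (p t) (f ℓ (q t))) t := by
    intro ℓ t
    rw [hasDerivAt_iff_tendsto_slope]
    set L := dot (p t) (f ℓ (q t)) with hL
    have hslopeq : Tendsto (slope q t) (𝓝[≠] t) (𝓝 (p t)) :=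
      hasDerivAt_iff_tendsto_slope.1 (hqd t)
    have ha : Tendsto (fun y => dot (slope q t y) (f ℓ (q t))) (𝓝[≠] t) (𝓝 L) := by
      have : Tendsto (fun y => ((slope q t y), f ℓ (q t))) (𝓝[≠] t) (𝓝 (p t, f ℓ (q t))) :=
        hslopeq.prodMk_nhds tendsto_const_nhds
      exact continuous_dot.continuousAt.tendsto.comp this
    have hb : Tendsto (fun y => dot (slope q t y) (f ℓ (q y))) (𝓝[≠] t) (𝓝 L) := by
      have hfq : Tendsto (fun y => f ℓ (q y)) (𝓝[≠] t) (𝓝 (f ℓ (q t))) :=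
        (((hfc ℓ).comp hqc).continuousAt.tendsto).mono_left nhdsWithin_le_nhds
      have : Tendsto (fun y => ((slope q t y), f ℓ (q y))) (𝓝[≠] t) (𝓝 (p t, f ℓ (q t))) :=
        hslopeq.prodMk_nhds hfq
      exact continuous_dot.continuousAt.tendsto.comp this
    -- pointwise sandwich
    have hbound : ∀ y ∈ ({t}ᶜ : Set ℝ),
        |slope (fun u => s ℓ (q u)) t y - L| ≤
          |dot (slope q t y) (f ℓ (q t)) - L| + |dot (slope q t y) (f ℓ (q y)) - L| := by
      intro y hy
      have hyt : y ≠ t := hy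
      set a := dot (slope q t y) (f ℓ (q t))
      set b := dot (slope q t y) (f ℓ (q y))
      have hkey1 : dot (q y - q t) (f ℓ (q t)) ≤ s ℓ (q y) - s ℓ (q t) := by
        have := hsub ℓ (q t) (q y); linarith
      have hkey2 : s ℓ (q y) - s ℓ (q t) ≤ dot (q y - q t) (f ℓ (q y)) := by
        have := hsub ℓ (q y) (q t)
        have hneg : dot (q t - q y) (f ℓ (q y)) = - dot (q y - q t) (f ℓ (q y)) := by
          rw [dot_sub_left, dot_sub_left]; ring
        rw [hneg] at this; linarith
      have hsq : slope q t y = (y - t)⁻¹ • (q y - q t) := by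
        rw [slope_def_module]
      have haeq : a = (y - t)⁻¹ * dot (q y - q t) (f ℓ (q t)) := by
        simp only [a, hsq, dot_smul_left]
      have hbeq : b = (y - t)⁻¹ * dot (q y - q t) (f ℓ (q y)) := by
        simp only [b, hsq, dot_smul_left]
      have hseq : slope (fun u => s ℓ (q u)) t y = (y - t)⁻¹ * (s ℓ (q y) - s ℓ (q t)) := by
        rw [slope_def_field]; field_simp
      apply abs_sub_le_of_between
      · rcases lt_or_gt_of_ne hyt with hlt | hgt
        · have hpos : (y - t)⁻¹ < 0 := inv_lt_zero.2 (by linarith)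
          refine min_le_of_right_le ?_
          rw [hbeq, hseq]
          exact mul_le_mul_of_nonpos_left hkey2 hpos.le
        · have hpos : 0 < (y - t)⁻¹ := inv_pos.2 (by linarith)
          refine min_le_of_left_le ?_
          rw [haeq, hseq]
          exact mul_le_mul_of_nonneg_left hkey1 hpos.le
      · rcases lt_or_gt_of_ne hyt with hlt | hgt
        · have hpos : (y - t)⁻¹ < 0 := inv_lt_zero.2 (by linarith)
          refine le_max_of_le_left ?_
          rw [haeq, hseq]
          exact mul_le_mul_of_nonpos_left hkey1 hpos.le
        · have hpos : 0 < (y - t)⁻¹ := inv_pos.2 (by linarith)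
          refine le_max_of_le_right ?_
          rw [hbeq, hseq]
          exact mul_le_mul_of_nonneg_left hkey2 hpos.le
    -- squeeze
    rw [tendsto_iff_dist_tendsto_zero]
    have habs : Tendsto (fun y => |dot (slope q t y) (f ℓ (q t)) - L| +
        |dot (slope q t y) (f ℓ (q y)) - L|) (𝓝[≠] t) (𝓝 0) := by
      have h1 : Tendsto (fun y => |dot (slope q t y) (f ℓ (q t)) - L|) (𝓝[≠] t) (𝓝 0) := by
        have := (ha.sub (tendsto_const_nhds (x := L))).abs
        simpa using this
      have h2 : Tendsto (fun y => |dot (slope q t y) (f ℓ (q y)) - L|) (𝓝[≠] t) (𝓝 0) := by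
        have := (hb.sub (tendsto_const_nhds (x := L))).abs
        simpa using this
      simpa using h1.add h2
    apply squeeze_zero' (Eventually.of_forall fun y => dist_nonneg) ?_ habs
    filter_upwards [self_mem_nhdsWithin] with y hy
    rw [Real.dist_eq]
    exact hbound y hy
  -- FTC for the weighted sum
  have hφd : ∀ t : ℝ, HasDerivAt (fun u => ∑ ℓ, α ℓ * s ℓ (q u))
      (dot (p t) (∑ ℓ, α ℓ • f ℓ (q t))) t := by
    intro t
    have : HasDerivAt (fun u => ∑ ℓ, α ℓ * s ℓ (q u))
        (∑ ℓ, α ℓ * dot (p t) (f ℓ (q t))) t := by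
      apply HasDerivAt.fun_sum
      intro ℓ _
      exact (hds ℓ t).const_mul (α ℓ)
    convert this using 1
    simp only [dot, Finset.sum_apply, Pi.smul_apply, smul_eq_mul, Finset.mul_sum]
    rw [Finset.sum_comm]
    apply Finset.sum_congr rfl; intros
    apply Finset.sum_congr rfl; intros
    ring
  have hGc : Continuous (fun τ => dot (p τ) (∑ ℓ, α ℓ • f ℓ (q τ))) := by
    have h2 : Continuous (fun τ => ∑ ℓ, α ℓ • f ℓ (q τ)) :=
      continuous_finset_sum _ fun ℓ _ => (((hfc ℓ).comp hqc)).const_smul (α ℓ)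
    exact continuous_dot.comp (hp.prodMk h2)
  have hFTC : ∫ τ in (0:ℝ)..T, dot (p τ) (∑ ℓ, α ℓ • f ℓ (q τ)) =
      (∑ ℓ, α ℓ * s ℓ (q T)) - (∑ ℓ, α ℓ * s ℓ (q 0)) := by
    exact intervalIntegral.integral_eq_sub_of_hasDerivAt
      (fun t _ => hφd t) (hGc.intervalIntegrable 0 T)
  have hq0 : q 0 = q0 := by
    simp [hqdef, traj]
  -- componentwise integral of p
  have hcomp : ∀ j, ∫ τ in (0:ℝ)..T, p τ j = q T j - q0 j := by
    intro j
    have := (ContinuousLinearMap.proj (R := ℝ) (φ := fun _ : Fin n => ℝ) j).intervalIntegral_comp_comm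
      (hp.intervalIntegrable 0 T : IntervalIntegrable p volume 0 T)
    simp only [ContinuousLinearMap.proj_apply] at this
    rw [this]
    simp [hqdef, traj]
  -- key per-coordinate bound
  have hkey : ∀ j : Fin n, q T j ≤ ∑ ℓ, α ℓ * (s ℓ (q T) + h ℓ (Pi.single j 1)) := by
    intro j
    have hterm : ∀ ℓ, q T j ≤ s ℓ (q T) + h ℓ (Pi.single j 1) := by
      intro ℓ
      have := (hf ℓ (q T)).2 (Pi.single j 1) (single_mem_simplex j)
      rw [dot_single] at this
      simp only [hsdef] at this ⊢
      linarith
    calc q T j = ∑ ℓ, α ℓ * q T j := by rw [← Finset.sum_mul, hα1, one_mul]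
    _ ≤ ∑ ℓ, α ℓ * (s ℓ (q T) + h ℓ (Pi.single j 1)) :=
        Finset.sum_le_sum fun ℓ _ => mul_le_mul_of_nonneg_left (hterm ℓ) (hα ℓ)
  -- assemble
  rw [sub_le_iff_le_add]
  apply ciSup_le
  intro j
  rw [hcomp j, hFTC, hq0]
  have hle : (∑ ℓ, α ℓ * ((dot q0 (f ℓ q0) - h ℓ (f ℓ q0)) - q0 j + h ℓ (Pi.single j 1)))
      ≤ ⨆ j', ∑ ℓ, α ℓ * ((dot q0 (f ℓ q0) - h ℓ (f ℓ q0)) - q0 j' + h ℓ (Pi.single j' 1)) :=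
    le_ciSup (f := fun j' => ∑ ℓ, α ℓ *
      ((dot q0 (f ℓ q0) - h ℓ (f ℓ q0)) - q0 j' + h ℓ (Pi.single j' 1)))
      (Set.Finite.bddAbove (Set.finite_range _)) j
  have hq0j : q0 j = ∑ ℓ, α ℓ * q0 j := by rw [← Finset.sum_mul, hα1, one_mul]
  have hsum : (∑ ℓ, α ℓ * ((dot q0 (f ℓ q0) - h ℓ (f ℓ q0)) - q0 j + h ℓ (Pi.single j 1)))
      = (∑ ℓ, α ℓ * s ℓ q0) - q0 j + ∑ ℓ, α ℓ * h ℓ (Pi.single j 1) := by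
    have expand : ∀ ℓ : Fin k, α ℓ * ((dot q0 (f ℓ q0) - h ℓ (f ℓ q0)) - q0 j
        + h ℓ (Pi.single j 1)) = α ℓ * s ℓ q0 - α ℓ * q0 j + α ℓ * h ℓ (Pi.single j 1) :=
      fun ℓ => by simp only [hsdef]; ring
    rw [Finset.sum_congr rfl (fun ℓ _ => expand ℓ), Finset.sum_add_distrib,
      Finset.sum_sub_distrib]
    have hh : ∑ ℓ : Fin k, α ℓ * q0 j = q0 j := by rw [← Finset.sum_mul, hα1, one_mul]
    rw [hh]
  have hkeyj := hkey j
  have hkeyj' : q T j ≤ (∑ ℓ, α ℓ * s ℓ (q T)) + ∑ ℓ, α ℓ * h ℓ (Pi.single j 1) := by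
    rw [← Finset.sum_add_distrib]
    convert hkeyj using 2 with ℓ
    ring
  linarith [hle, hsum ▸ hle]
end
end
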